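/- Let G = SL(3,ℝ), H₀ = diag(a,b,c) traceless. Then there exists k ∈ SO(3) such that k⁻¹ H₀ k has all diagonal entries equal to zero. -/

import Mathlib

open Matrix

private lemma diag3 (a b c : ℝ) :
    Matrix.diagonal ![a, b, c] = !![a,0,0; 0,b,0; 0,0,c] := by
  ext i j; fin_cases i <;> fin_cases j <;> rfl

private lemma exists_pq (x y : ℝ) (hxy : x*y ≤ 0) (hne : x ≠ y) :
    ∃ p q : ℝ, p^2 + q^2 = 1 ∧ x*p^2 + y*q^2 = 0 := by
  have hd : y - x ≠ 0 := sub_ne_zero.mpr (Ne.symm hne)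
  have h1 : 0 ≤ y / (y - x) := by
    have hn : 0 ≤ y * (y - x) := by nlinarith [sq_nonneg y]
    have : y / (y - x) = y * (y - x) / (y - x)^2 := by field_simp
    rw [this]; positivity
  have h2 : 0 ≤ (-x) / (y - x) := by
    have hn : 0 ≤ (-x) * (y - x) := by nlinarith [sq_nonneg x]
    have : (-x) / (y - x) = (-x) * (y - x) / (y - x)^2 := by field_simp
    rw [this]; positivity
  refine ⟨Real.sqrt (y / (y - x)), Real.sqrt ((-x) / (y - x)), ?_, ?_⟩ <;>
    rw [Real.sq_sqrt h1, Real.sq_sqrt h2] <;> field_simp <;> ring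

private lemma core_ab (a b c p q r : ℝ) (h : a + b + c = 0)
    (hpq : p^2 + q^2 = 1) (h2 : a*p^2 + b*q^2 = 0) (hr : r^2 = 1/2) :
    ∃ k : Matrix (Fin 3) (Fin 3) ℝ,
      kᵀ * k = 1 ∧ k.det = 1 ∧
      ∀ i : Fin 3, (kᵀ * Matrix.diagonal ![a, b, c] * k) i i = 0 := by
  have hT : (!![p, -(q*r), q*r; q, p*r, -(p*r); 0, r, r] : Matrix (Fin 3) (Fin 3) ℝ)ᵀ
      = !![p, q, 0; -(q*r), p*r, r; q*r, -(p*r), r] := by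
    ext i j; fin_cases i <;> fin_cases j <;> rfl
  refine ⟨!![p, -(q*r), q*r; q, p*r, -(p*r); 0, r, r], ?_, ?_, ?_⟩
  · rw [hT, Matrix.mul_fin_three]
    ext i j
    fin_cases i <;> fin_cases j <;>
      simp [Matrix.one_apply] <;>
      first
        | ring1
        | linear_combination hpq
        | linear_combination r^2*hpq + 2*hr
        | linear_combination -(r^2)*hpq
  · simp [Matrix.det_fin_three]
    linear_combination 2*r^2*hpq + 2*hr
  · intro i
    rw [hT, diag3, Matrix.mul_fin_three, Matrix.mul_fin_three]
    fin_cases i <;>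
      simp <;>
      first
        | linear_combination h2
        | linear_combination (a+b)*r^2*hpq - r^2*h2 + r^2*h

private lemma core_ac (a b c p q r : ℝ) (h : a + b + c = 0)
    (hpq : p^2 + q^2 = 1) (h2 : a*p^2 + c*q^2 = 0) (hr : r^2 = 1/2) :
    ∃ k : Matrix (Fin 3) (Fin 3) ℝ,
      kᵀ * k = 1 ∧ k.det = 1 ∧
      ∀ i : Fin 3, (kᵀ * Matrix.diagonal ![a, b, c] * k) i i = 0 := by
  have hT : (!![-p, -(q*r), q*r; 0, r, r; -q, p*r, -(p*r)] : Matrix (Fin 3) (Fin 3) ℝ)ᵀ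
      = !![-p, 0, -q; -(q*r), r, p*r; q*r, r, -(p*r)] := by
    ext i j; fin_cases i <;> fin_cases j <;> rfl
  refine ⟨!![-p, -(q*r), q*r; 0, r, r; -q, p*r, -(p*r)], ?_, ?_, ?_⟩
  · rw [hT, Matrix.mul_fin_three]
    ext i j
    fin_cases i <;> fin_cases j <;>
      simp [Matrix.one_apply] <;>
      first
        | ring1
        | linear_combination hpq
        | linear_combination r^2*hpq + 2*hr
        | linear_combination -(r^2)*hpq
  · simp [Matrix.det_fin_three]
    linear_combination 2*r^2*hpq + 2*hr
  · intro i
    rw [hT, diag3, Matrix.mul_fin_three, Matrix.mul_fin_three]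
    fin_cases i <;>
      simp <;>
      first
        | linear_combination h2
        | linear_combination (a+c)*r^2*hpq - r^2*h2 + r^2*h

private lemma core_bc (a b c p q r : ℝ) (h : a + b + c = 0)
    (hpq : p^2 + q^2 = 1) (h2 : b*p^2 + c*q^2 = 0) (hr : r^2 = 1/2) :
    ∃ k : Matrix (Fin 3) (Fin 3) ℝ,
      kᵀ * k = 1 ∧ k.det = 1 ∧
      ∀ i : Fin 3, (kᵀ * Matrix.diagonal ![a, b, c] * k) i i = 0 := by
  have hT : (!![0, r, r; p, -(q*r), q*r; q, p*r, -(p*r)] : Matrix (Fin 3) (Fin 3) ℝ)ᵀ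
      = !![0, p, q; r, -(q*r), p*r; r, q*r, -(p*r)] := by
    ext i j; fin_cases i <;> fin_cases j <;> rfl
  refine ⟨!![0, r, r; p, -(q*r), q*r; q, p*r, -(p*r)], ?_, ?_, ?_⟩
  · rw [hT, Matrix.mul_fin_three]
    ext i j
    fin_cases i <;> fin_cases j <;>
      simp [Matrix.one_apply] <;>
      first
        | ring1
        | linear_combination hpq
        | linear_combination r^2*hpq + 2*hr
        | linear_combination -(r^2)*hpq
  · simp [Matrix.det_fin_three]
    linear_combination 2*r^2*hpq + 2*hr
  · intro i
    rw [hT, diag3, Matrix.mul_fin_three, Matrix.mul_fin_three]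
    fin_cases i <;>
      simp <;>
      first
        | linear_combination h2
        | linear_combination (b+c)*r^2*hpq - r^2*h2 + r^2*h

theorem stmt_18 (a b c : ℝ) (h : a + b + c = 0) :
    ∃ k : Matrix (Fin 3) (Fin 3) ℝ,
      kᵀ * k = 1 ∧ k.det = 1 ∧
      ∀ i : Fin 3, (k⁻¹ * Matrix.diagonal ![a, b, c] * k) i i = 0 := by
  have hr : (Real.sqrt (1/2))^2 = 1/2 := Real.sq_sqrt (by norm_num)
  have hsign : (a*b ≤ 0 ∧ a ≠ b) ∨ (a*c ≤ 0 ∧ a ≠ c) ∨ (b*c ≤ 0 ∧ b ≠ c) ∨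
      (a = 0 ∧ b = 0 ∧ c = 0) := by
    rcases lt_trichotomy a 0 with ha | ha | ha <;>
      rcases lt_trichotomy b 0 with hb | hb | hb
    · exact Or.inr (Or.inl ⟨by nlinarith, by intro hh; nlinarith⟩)
    · exact Or.inr (Or.inl ⟨by nlinarith, by intro hh; nlinarith⟩)
    · exact Or.inl ⟨by nlinarith, by intro hh; nlinarith⟩
    · exact Or.inr (Or.inr (Or.inl ⟨by nlinarith, by intro hh; nlinarith⟩))
    · exact Or.inr (Or.inr (Or.inr ⟨ha, hb, by linarith⟩))
    · exact Or.inr (Or.inr (Or.inl ⟨by nlinarith, by intro hh; nlinarith⟩))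
    · exact Or.inl ⟨by nlinarith, by intro hh; nlinarith⟩
    · exact Or.inr (Or.inl ⟨by nlinarith, by intro hh; nlinarith⟩)
    · exact Or.inr (Or.inl ⟨by nlinarith, by intro hh; nlinarith⟩)
  have main : ∃ k : Matrix (Fin 3) (Fin 3) ℝ,
      kᵀ * k = 1 ∧ k.det = 1 ∧
      ∀ i : Fin 3, (kᵀ * Matrix.diagonal ![a, b, c] * k) i i = 0 := by
    rcases hsign with ⟨hle, hne⟩ | ⟨hle, hne⟩ | ⟨hle, hne⟩ | ⟨ha, hb, hc⟩
    · obtain ⟨p, q, hpq, h2⟩ := exists_pq a b hle hne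
      exact core_ab a b c p q _ h hpq h2 hr
    · obtain ⟨p, q, hpq, h2⟩ := exists_pq a c hle hne
      exact core_ac a b c p q _ h hpq h2 hr
    · obtain ⟨p, q, hpq, h2⟩ := exists_pq b c hle hne
      exact core_bc a b c p q _ h hpq h2 hr
    · subst ha hb hc
      refine ⟨1, by simp, by simp, ?_⟩
      intro i
      have : Matrix.diagonal ![(0:ℝ), 0, 0] = 0 := by
        ext i j; fin_cases i <;> fin_cases j <;> rfl
      simp [this]
  obtain ⟨k, hk1, hk2, hk3⟩ := main
  have hinv : k⁻¹ = kᵀ := Matrix.inv_eq_left_inv hk1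
  exact ⟨k, hk1, hk2, by rw [hinv]; exact hk3⟩
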